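/- Let f ∈ ℤ[X] be a polynomial of degree m with all coefficients bounded in absolute value by H, and let α be a root of f. If μ is the minimal integer polynomial of α (primitive, dividing f in ℤ[X] up to content), then every coefficient of μ has absolute value at most H · 4^m. -/

import Mathlib

open Polynomial Complex Finset

noncomputable def N2 (p : ℂ[X]) : ℝ :=
  ∑ i ∈ Finset.range (p.natDegree + 1), Complex.normSq (p.coeff i)

lemma N2_eq (p : ℂ[X]) {D : ℕ} (h : p.natDegree < D) :
    N2 p = ∑ i ∈ Finset.range D, Complex.normSq (p.coeff i) := by
  refine Finset.sum_subset (Finset.range_subset_range.2 h) ?_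
  intro i _ hi
  rw [Finset.mem_range, not_lt] at hi
  rw [coeff_eq_zero_of_natDegree_lt (by omega), map_zero]

lemma N2_nonneg (p : ℂ[X]) : 0 ≤ N2 p :=
  Finset.sum_nonneg fun _ _ => Complex.normSq_nonneg _

lemma normSq_coeff_le_N2 (p : ℂ[X]) (i : ℕ) : Complex.normSq (p.coeff i) ≤ N2 p := by
  rcases le_or_gt i p.natDegree with h | h
  · exact Finset.single_le_sum (f := fun j => Complex.normSq (p.coeff j))
      (fun _ _ => Complex.normSq_nonneg _) (Finset.mem_range.2 (by omega))
  · rw [coeff_eq_zero_of_natDegree_lt h, map_zero]; exact N2_nonneg p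

lemma cross1 (r z w : ℂ) : Complex.normSq (z - r * w) =
    Complex.normSq z + Complex.normSq r * Complex.normSq w
      - 2 * ((starRingEnd ℂ r * z) * starRingEnd ℂ w).re := by
  rw [Complex.normSq_sub, Complex.normSq_mul]
  ring_nf
  rw [map_mul]
  ring_nf

lemma cross2 (r z w : ℂ) : Complex.normSq (starRingEnd ℂ r * z - w) =
    Complex.normSq r * Complex.normSq z + Complex.normSq w
      - 2 * ((starRingEnd ℂ r * z) * starRingEnd ℂ w).re := by
  rw [Complex.normSq_sub, Complex.normSq_mul, Complex.normSq_conj]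

lemma sum_flip {ι : Type*} (s : Finset ι) (r : ℂ) (a b : ι → ℂ)
    (h : ∑ i ∈ s, Complex.normSq (a i) = ∑ i ∈ s, Complex.normSq (b i)) :
    ∑ i ∈ s, Complex.normSq (a i - r * b i)
      = ∑ i ∈ s, Complex.normSq (starRingEnd ℂ r * a i - b i) := by
  simp only [cross1, cross2]
  rw [Finset.sum_sub_distrib, Finset.sum_sub_distrib, Finset.sum_add_distrib,
    Finset.sum_add_distrib, h, ← Finset.mul_sum, ← Finset.mul_sum, ← Finset.mul_sum, h]
  ring

lemma shift_sum (q : ℂ[X]) {D : ℕ} (h : q.natDegree < D) :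
    ∑ i ∈ Finset.range (D + 1), Complex.normSq ((X * q).coeff i)
      = ∑ i ∈ Finset.range (D + 1), Complex.normSq (q.coeff i) := by
  rw [Finset.sum_range_succ', Finset.sum_range_succ]
  simp [coeff_X_mul, Polynomial.mul_coeff_zero, coeff_eq_zero_of_natDegree_lt h]

lemma flipN (r : ℂ) (q : ℂ[X]) :
    N2 ((X - C r) * q) = N2 ((C (starRingEnd ℂ r) * X - 1) * q) := by
  have hd1 : ((X - C r) * q).natDegree < q.natDegree + 2 := by
    calc ((X - C r) * q).natDegree ≤ (X - C r).natDegree + q.natDegree := natDegree_mul_le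
    _ ≤ 1 + q.natDegree := by rw [natDegree_X_sub_C]
    _ < q.natDegree + 2 := by omega
  have hd2 : ((C (starRingEnd ℂ r) * X - 1) * q).natDegree < q.natDegree + 2 := by
    calc ((C (starRingEnd ℂ r) * X - 1) * q).natDegree
        ≤ (C (starRingEnd ℂ r) * X - 1).natDegree + q.natDegree := natDegree_mul_le
    _ ≤ 1 + q.natDegree := by
        gcongr
        refine (natDegree_sub_le _ _).trans ?_
        simp [natDegree_one]
        exact (natDegree_C_mul_le _ _).trans (by simp)
    _ < q.natDegree + 2 := by omega
  rw [N2_eq _ hd1, N2_eq _ hd2]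
  have h1 : ∀ i, ((X - C r) * q).coeff i = (X * q).coeff i - r * q.coeff i := by
    intro i; rw [sub_mul, coeff_sub, coeff_C_mul]
  have h2 : ∀ i, ((C (starRingEnd ℂ r) * X - 1) * q).coeff i
      = starRingEnd ℂ r * (X * q).coeff i - q.coeff i := by
    intro i; rw [sub_mul, one_mul, coeff_sub, mul_assoc, coeff_C_mul]
  simp only [h1, h2]
  exact sum_flip _ r _ _ (shift_sum q (by omega))

noncomputable def flipf (r : ℂ) : ℂ[X] :=
  if 1 < norm r then C (starRingEnd ℂ r) * X - 1 else X - C r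

lemma flip_prod (S : Multiset ℂ) : ∀ q : ℂ[X],
    N2 ((S.map fun r => X - C r).prod * q) = N2 ((S.map flipf).prod * q) := by
  induction S using Multiset.induction_on with
  | empty => intro q; simp
  | cons r S IH =>
    intro q
    simp only [Multiset.map_cons, Multiset.prod_cons]
    rw [show (X - C r) * (S.map fun r => X - C r).prod * q
        = (S.map fun r => X - C r).prod * ((X - C r) * q) by ring,
      IH ((X - C r) * q),
      show (S.map flipf).prod * ((X - C r) * q) = (X - C r) * ((S.map flipf).prod * q) by ring]
    by_cases h : 1 < norm r
    · rw [flipN r ((S.map flipf).prod * q), flipf, if_pos h]; congr 1; ring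
    · rw [flipf, if_neg h]; congr 1; ring

lemma flipf_leadingCoeff (r : ℂ) :
    norm (flipf r).leadingCoeff = max 1 (norm r) := by
  rw [flipf]
  by_cases h : 1 < norm r
  · rw [if_pos h]
    have hr : (starRingEnd ℂ r) ≠ 0 := by
      intro h0
      have : r = 0 := by simpa using congrArg (starRingEnd ℂ) h0
      rw [this, norm_zero] at h; linarith
    have : (C (starRingEnd ℂ r) * X - 1).leadingCoeff = starRingEnd ℂ r := by
      have hd : (C (starRingEnd ℂ r) * X).natDegree = 1 := by
        rw [natDegree_C_mul hr, natDegree_X]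
      rw [leadingCoeff, natDegree_sub_eq_left_of_natDegree_lt (by simp [hd, natDegree_one]),
        coeff_sub, hd]
      simp [coeff_one]
    rw [this, Complex.norm_conj, max_eq_right h.le]
  · rw [if_neg h, Monic.leadingCoeff (monic_X_sub_C r), norm_one, max_eq_left (not_lt.1 h)]

noncomputable def Mah (p : ℂ[X]) : ℝ :=
  norm p.leadingCoeff * ((p.roots).map (fun r => max 1 (norm r))).prod

lemma one_le_prod_max (S : Multiset ℂ) :
    1 ≤ (S.map fun r => max 1 (norm r)).prod := by
  induction S using Multiset.induction_on with
  | empty => simp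
  | cons r S IH =>
    simp only [Multiset.map_cons, Multiset.prod_cons]
    nlinarith [le_max_left 1 (norm r)]

lemma prod_abs_nonneg (T : Multiset ℂ) : 0 ≤ (T.map norm).prod := by
  induction T using Multiset.induction_on with
  | empty => simp
  | cons r T IH =>
    simp only [Multiset.map_cons, Multiset.prod_cons]
    exact mul_nonneg (norm_nonneg r) IH

lemma prod_abs_le_prod_max_self (T : Multiset ℂ) :
    (T.map norm).prod ≤ (T.map fun r => max 1 (norm r)).prod := by
  induction T using Multiset.induction_on with
  | empty => simp
  | cons r T IH =>
    simp only [Multiset.map_cons, Multiset.prod_cons]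
    exact mul_le_mul (le_max_right _ _) IH (prod_abs_nonneg T)
      (le_trans zero_le_one (le_max_left _ _))

lemma prod_abs_le_prod_max {T S : Multiset ℂ} (h : T ≤ S) :
    (T.map norm).prod ≤ (S.map fun r => max 1 (norm r)).prod := by
  obtain ⟨U, rfl⟩ := Multiset.le_iff_exists_add.1 h
  rw [Multiset.map_add, Multiset.prod_add]
  calc (T.map norm).prod ≤ (T.map fun r => max 1 (norm r)).prod :=
        prod_abs_le_prod_max_self T
  _ = (T.map fun r => max 1 (norm r)).prod * 1 := (mul_one _).symm
  _ ≤ _ := by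
      have h1 := one_le_prod_max T
      have h2 := one_le_prod_max U
      nlinarith

lemma abs_esymm_le (S : Multiset ℂ) (k : ℕ) :
    norm (S.esymm k) ≤ ((Multiset.card S).choose k : ℝ)
      * (S.map fun r => max 1 (norm r)).prod := by
  rw [Multiset.esymm]
  calc norm (((S.powersetCard k).map Multiset.prod).sum)
      ≤ (((S.powersetCard k).map Multiset.prod).map (fun z => norm z)).sum := by
        simpa using
          norm_multiset_sum_le ((S.powersetCard k).map Multiset.prod)
  _ ≤ Multiset.card (((S.powersetCard k).map Multiset.prod).map (fun z => norm z))
        • ((S.map fun r => max 1 (norm r)).prod) := by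
      apply Multiset.sum_le_card_nsmul
      intro x hx
      simp only [Multiset.mem_map] at hx
      obtain ⟨z, ⟨T, hT, rfl⟩, rfl⟩ := hx
      rw [show norm T.prod = (T.map norm).prod from
        (map_multiset_prod (normHom (α := ℂ)) T).trans rfl]
      exact prod_abs_le_prod_max (Multiset.mem_powersetCard.1 hT).1
  _ = ((Multiset.card S).choose k : ℝ) * (S.map fun r => max 1 (norm r)).prod := by
      rw [Multiset.card_map, Multiset.card_map, Multiset.card_powersetCard, nsmul_eq_mul]

lemma Mah_nonneg (p : ℂ[X]) : 0 ≤ Mah p :=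
  mul_nonneg (norm_nonneg _) (le_trans zero_le_one (one_le_prod_max _))

lemma landau (p : ℂ[X]) : (Mah p)^2 ≤ N2 p := by
  have hsplit : Splits p := IsAlgClosed.splits p
  have hfact := hsplit.eq_prod_roots
  set c := p.leadingCoeff with hc
  set R := p.roots with hR
  have hN : N2 p = N2 ((R.map flipf).prod * C c) := by
    conv_lhs => rw [hfact, mul_comm]
    exact flip_prod R (C c)
  set Q := (R.map flipf).prod * C c with hQ
  have hQlead : norm Q.leadingCoeff = Mah p := by
    rw [hQ, leadingCoeff_mul, leadingCoeff_C, norm_mul, leadingCoeff_multiset_prod,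
      Multiset.map_map]
    rw [show norm (R.map (leadingCoeff ∘ flipf)).prod
        = ((R.map (leadingCoeff ∘ flipf)).map norm).prod from
        (map_multiset_prod (normHom (α := ℂ)) _).trans rfl,
      Multiset.map_map]
    rw [show R.map (norm ∘ leadingCoeff ∘ flipf)
        = R.map (fun r => max 1 (norm r))
      from Multiset.map_congr rfl (fun r _ => flipf_leadingCoeff r), Mah]
    ring
  calc (Mah p)^2 = Complex.normSq Q.leadingCoeff := by rw [← hQlead, Complex.sq_norm]
  _ ≤ N2 Q := normSq_coeff_le_N2 Q Q.natDegree
  _ = N2 p := hN.symm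

lemma coeff_abs_le (p : ℂ[X]) (i : ℕ) :
    norm (p.coeff i) ≤ (p.natDegree.choose i : ℝ) * Mah p := by
  rcases eq_or_ne p 0 with rfl | hp
  · simp [Mah]
  rcases le_or_gt i p.natDegree with h | h
  · have hsplit : Splits p := IsAlgClosed.splits p
    rw [coeff_eq_esymm_roots_of_splits hsplit h]
    have hcard : Multiset.card p.roots = p.natDegree := splits_iff_card_roots.1 hsplit
    rw [norm_mul, norm_mul, norm_pow]
    rw [show ‖(-1 : ℂ)‖ = 1 by simp, one_pow, mul_one]
    calc norm p.leadingCoeff * norm (p.roots.esymm (p.natDegree - i))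
        ≤ norm p.leadingCoeff * (((Multiset.card p.roots).choose (p.natDegree - i) : ℝ)
            * (p.roots.map fun r => max 1 (norm r)).prod) :=
          mul_le_mul_of_nonneg_left (abs_esymm_le _ _) (norm_nonneg _)
    _ = ((p.natDegree.choose i : ℕ) : ℝ) * Mah p := by
        rw [hcard, Nat.choose_symm h, Mah]; ring
  · rw [coeff_eq_zero_of_natDegree_lt h, Nat.choose_eq_zero_of_lt h]
    simp

lemma Mah_mul (P G : ℂ[X]) (hP : P ≠ 0) (hG : G ≠ 0) : Mah (P * G) = Mah P * Mah G := by
  rw [Mah, Mah, Mah, leadingCoeff_mul, norm_mul, roots_mul (mul_ne_zero hP hG),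
    Multiset.map_add, Multiset.prod_add]
  ring

/-- If `α` is a root of `f ∈ ℤ[X]` of degree `m` with coefficients bounded by `H`, then
the minimal integral polynomial `μ` of `α` (primitive, irreducible, dividing `f`) has
all coefficients of absolute value at most `H * 4^m`. -/
theorem stmt_6 (m : ℕ) (H : ℤ) (f : Polynomial ℤ) (hf : f ≠ 0)
    (hdeg : f.natDegree = m) (hht : ∀ i, |f.coeff i| ≤ H)
    (α : ℂ) (hroot : aeval α f = 0)
    (μ : Polynomial ℤ) (hprim : μ.IsPrimitive) (hirr : Irreducible μ)
    (hμroot : aeval α μ = 0) (hdvd : μ ∣ f) :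
    ∀ i, |μ.coeff i| ≤ H * 4 ^ m := by
  intro i
  obtain ⟨g, hg⟩ := hdvd
  have hμ0 : μ ≠ 0 := hirr.ne_zero
  have hg0 : g ≠ 0 := by
    intro h; rw [h, mul_zero] at hg; exact hf hg
  have hinj : Function.Injective (Int.castRingHom ℂ) := fun a b h =>
    Int.cast_injective (α := ℂ) (by simpa using h)
  set F := f.map (Int.castRingHom ℂ) with hF
  set P := μ.map (Int.castRingHom ℂ) with hP
  set G := g.map (Int.castRingHom ℂ) with hG
  have hF0 : F ≠ 0 := (Polynomial.map_ne_zero_iff hinj).2 hf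
  have hP0 : P ≠ 0 := (Polynomial.map_ne_zero_iff hinj).2 hμ0
  have hG0 : G ≠ 0 := (Polynomial.map_ne_zero_iff hinj).2 hg0
  have hFPG : F = P * G := by rw [hF, hP, hG, hg, Polynomial.map_mul]
  have hFdeg : F.natDegree = m := by
    rw [hF, natDegree_map_eq_of_injective hinj, hdeg]
  have h1H : (1 : ℤ) ≤ H := by
    refine le_trans ?_ (hht f.natDegree)
    exact Int.one_le_abs (leadingCoeff_ne_zero.2 hf)
  -- bound on N2 F
  have hN2F : N2 F ≤ (m + 1 : ℝ) * (H : ℝ)^2 := by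
    rw [N2, hFdeg]
    calc ∑ j ∈ Finset.range (m + 1), Complex.normSq (F.coeff j)
        ≤ ∑ _j ∈ Finset.range (m + 1), (H : ℝ)^2 := by
          refine Finset.sum_le_sum fun j _ => ?_
          rw [hF, coeff_map]
          have : Complex.normSq ((Int.castRingHom ℂ) (f.coeff j))
              = (|f.coeff j| : ℝ)^2 := by
            rw [← Complex.sq_norm]
            norm_num [Complex.norm_intCast]
          rw [this]
          have h1 : (|f.coeff j| : ℝ) ≤ (H : ℝ) := by exact_mod_cast hht j
          have h2 : (0 : ℝ) ≤ (|f.coeff j| : ℝ) := by positivity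
          nlinarith
    _ = (m + 1 : ℝ) * (H : ℝ)^2 := by
        rw [Finset.sum_const, Finset.card_range, nsmul_eq_mul]; push_cast; ring
  -- Mah P ≤ Mah F
  have h1G : 1 ≤ Mah G := by
    rw [Mah]
    have : (1:ℝ) ≤ norm G.leadingCoeff := by
      rw [hG, leadingCoeff, natDegree_map_eq_of_injective hinj, coeff_map]
      have hlc : g.leadingCoeff ≠ 0 := leadingCoeff_ne_zero.2 hg0
      have := Int.one_le_abs hlc
      calc (1:ℝ) ≤ |(g.leadingCoeff : ℝ)| := by exact_mod_cast this
      _ = norm ((Int.castRingHom ℂ) (g.coeff g.natDegree)) := by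
          rw [show ((Int.castRingHom ℂ) (g.coeff g.natDegree)) = ((g.leadingCoeff : ℤ) : ℂ)
            from rfl, Complex.norm_intCast]
    nlinarith [one_le_prod_max G.roots]
  have hMPF : Mah P ≤ Mah F := by
    rw [hFPG, Mah_mul P G hP0 hG0]
    nlinarith [Mah_nonneg P]
  -- coefficient bound
  have hPdeg : P.natDegree ≤ m := by
    rw [hP, natDegree_map_eq_of_injective hinj, ← hdeg]
    exact natDegree_le_of_dvd ⟨g, hg⟩ hf
  have hchoose : (P.natDegree.choose i : ℝ) ≤ (2:ℝ)^m := by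
    have h2 : P.natDegree.choose i ≤ 2^m := by
      rcases le_or_gt i P.natDegree with h | h
      · calc P.natDegree.choose i ≤ ∑ j ∈ Finset.range (P.natDegree + 1), P.natDegree.choose j :=
            Finset.single_le_sum (fun _ _ => Nat.zero_le _) (Finset.mem_range.2 (by omega))
        _ = 2^P.natDegree := Nat.sum_range_choose P.natDegree
        _ ≤ 2^m := Nat.pow_le_pow_right (by norm_num) hPdeg
      · rw [Nat.choose_eq_zero_of_lt h]; exact Nat.zero_le _
    exact_mod_cast h2
  set A := norm (P.coeff i) with hA
  have hAle : A ≤ (2:ℝ)^m * Mah F := by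
    calc A ≤ (P.natDegree.choose i : ℝ) * Mah P := coeff_abs_le P i
    _ ≤ (2:ℝ)^m * Mah P := mul_le_mul_of_nonneg_right hchoose (Mah_nonneg P)
    _ ≤ (2:ℝ)^m * Mah F := by
        have : (0:ℝ) ≤ (2:ℝ)^m := by positivity
        nlinarith
  have hMF2 : (Mah F)^2 ≤ (m + 1 : ℝ) * (H : ℝ)^2 := le_trans (landau F) hN2F
  have hm4 : (m + 1 : ℝ) ≤ (2:ℝ)^m * (2:ℝ)^m := by
    have : m + 1 ≤ 4^m := Nat.lt_pow_self (by norm_num : 1 < 4)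
    calc (m + 1 : ℝ) ≤ ((4:ℕ):ℝ)^m := by exact_mod_cast this
    _ = (2:ℝ)^m * (2:ℝ)^m := by
        rw [← pow_add, ← two_mul, pow_mul]; norm_num
  have hHr : (1:ℝ) ≤ (H:ℝ) := by exact_mod_cast h1H
  have hx : (1:ℝ) ≤ (2:ℝ)^m := one_le_pow₀ (by norm_num)
  have hA0 : 0 ≤ A := norm_nonneg _
  have hfinal : A ≤ (2:ℝ)^m * (2:ℝ)^m * (H:ℝ) := by
    have hsq : A^2 ≤ ((2:ℝ)^m * (2:ℝ)^m * (H:ℝ))^2 := by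
      calc A^2 ≤ ((2:ℝ)^m * Mah F)^2 := by nlinarith [Mah_nonneg F]
      _ = (2:ℝ)^m * (2:ℝ)^m * (Mah F)^2 := by ring
      _ ≤ (2:ℝ)^m * (2:ℝ)^m * ((m + 1 : ℝ) * (H : ℝ)^2) := by nlinarith
      _ ≤ ((2:ℝ)^m * (2:ℝ)^m * (H:ℝ))^2 := by nlinarith
    exact le_of_pow_le_pow_left₀ (by norm_num) (by positivity) hsq
  have hAeq : (|μ.coeff i| : ℝ) = A := by
    rw [hA, hP, coeff_map]
    rw [show ((Int.castRingHom ℂ) (μ.coeff i)) = ((μ.coeff i : ℤ) : ℂ) from rfl,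
      Complex.norm_intCast]
  have : (|μ.coeff i| : ℝ) ≤ (H : ℝ) * (4:ℝ)^m := by
    rw [hAeq]
    calc A ≤ (2:ℝ)^m * (2:ℝ)^m * (H:ℝ) := hfinal
    _ = (H : ℝ) * (4:ℝ)^m := by
        rw [← pow_add, ← two_mul, pow_mul]; norm_num; ring
  exact_mod_cast this
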